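/- Let m ≥ 2, 1 ≤ k ≤ m, let a^1, …, a^m ∈ ℝ^n be pairwise distinct, let F be a nonempty compact convex subset of ℝ^n with 0 ∈ int(F) and Minkowski gauge ρ_F, and let x̄ = (x̄^1, …, x̄^k) be a global minimizer of f_F(x^1,…,x^k) = Σ_{i=1}^m min_{ℓ=1,…,k} ρ_F(x^ℓ − a^i) over (ℝ^n)^k. Then the components of x̄ are pairwise distinct: x̄^{ℓ₁} ≠ x̄^{ℓ₂} whenever ℓ₁ ≠ ℓ₂. -/

import Mathlib

/-- `min_{ℓ=1,…,k} ρ_F(x^ℓ − p)`. -/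
noncomputable def minGauge {n k : ℕ} (hk : 0 < k) (F : Set (EuclideanSpace ℝ (Fin n)))
    (x : Fin k → EuclideanSpace ℝ (Fin n)) (p : EuclideanSpace ℝ (Fin n)) : ℝ :=
  Finset.univ.inf' ⟨⟨0, hk⟩, Finset.mem_univ _⟩ fun ℓ => gauge F (x ℓ - p)

/-- The generalized multi-source Weber objective
`f_F(x) = Σ_i min_ℓ ρ_F(x^ℓ − a^i)`. -/
noncomputable def weberObj {n m k : ℕ} (hk : 0 < k) (F : Set (EuclideanSpace ℝ (Fin n)))
    (a : Fin m → EuclideanSpace ℝ (Fin n)) (x : Fin k → EuclideanSpace ℝ (Fin n)) : ℝ :=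
  ∑ i, minGauge hk F x (a i)

theorem stmt8 (n m k : ℕ) (hm : 2 ≤ m) (hk : 1 ≤ k) (hkm : k ≤ m)
    (a : Fin m → EuclideanSpace ℝ (Fin n)) (ha : Function.Injective a)
    (F : Set (EuclideanSpace ℝ (Fin n)))
    (hne : F.Nonempty) (hcomp : IsCompact F) (hconv : Convex ℝ F)
    (h0 : (0 : EuclideanSpace ℝ (Fin n)) ∈ interior F)
    (xb : Fin k → EuclideanSpace ℝ (Fin n))
    (hmin : ∀ x, weberObj hk F a xb ≤ weberObj hk F a x) :
    ∀ ℓ₁ ℓ₂ : Fin k, ℓ₁ ≠ ℓ₂ → xb ℓ₁ ≠ xb ℓ₂ := by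
  classical
  intro ℓ₁ ℓ₂ hne12 heq
  have habs : Absorbent ℝ F := absorbent_nhds_zero (mem_interior_iff_mem_nhds.1 h0)
  have hvb : Bornology.IsVonNBounded ℝ F := NormedSpace.isVonNBounded_of_isBounded ℝ hcomp.isBounded
  have hgpos : ∀ v : EuclideanSpace ℝ (Fin n), v ≠ 0 → 0 < gauge F v := fun v hv =>
    (gauge_pos habs hvb).2 hv
  -- the image of xb misses some a i
  set T : Finset (EuclideanSpace ℝ (Fin n)) := Finset.image xb Finset.univ with hT
  have hTsub : T ⊆ Finset.image xb (Finset.univ.erase ℓ₂) := by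
    intro v hv
    rw [hT, Finset.mem_image] at hv
    obtain ⟨ℓ, -, rfl⟩ := hv
    by_cases h : ℓ = ℓ₂
    · subst h
      exact Finset.mem_image.2 ⟨ℓ₁, Finset.mem_erase.2 ⟨hne12, Finset.mem_univ _⟩, heq⟩
    · exact Finset.mem_image.2 ⟨ℓ, Finset.mem_erase.2 ⟨h, Finset.mem_univ _⟩, rfl⟩
  have hTcard : T.card < m := by
    calc T.card ≤ (Finset.univ.erase ℓ₂).card := le_trans (Finset.card_le_card hTsub)
            (Finset.card_image_le)
      _ < k := by
          rw [Finset.card_erase_of_mem (Finset.mem_univ _), Finset.card_univ, Fintype.card_fin]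
          omega
      _ ≤ m := hkm
  obtain ⟨i, hi⟩ : ∃ i : Fin m, a i ∉ T := by
    by_contra h
    push_neg at h
    have : (Finset.image a Finset.univ) ⊆ T := by
      intro v hv
      rw [Finset.mem_image] at hv
      obtain ⟨j, -, rfl⟩ := hv
      exact h j
    have := Finset.card_le_card this
    rw [Finset.card_image_of_injective _ ha, Finset.card_univ, Fintype.card_fin] at this
    omega
  -- new configuration
  set x' : Fin k → EuclideanSpace ℝ (Fin n) := Function.update xb ℓ₂ (a i) with hx'
  -- pointwise bound
  have hle : ∀ j : Fin m, minGauge hk F x' (a j) ≤ minGauge hk F xb (a j) := by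
    intro j
    apply Finset.le_inf'
    intro ℓ₀ _
    by_cases h : ℓ₀ = ℓ₂
    · subst h
      calc minGauge hk F x' (a j) ≤ gauge F (x' ℓ₁ - a j) := Finset.inf'_le _ (Finset.mem_univ _)
        _ = gauge F (xb ℓ₀ - a j) := by rw [hx', Function.update_of_ne hne12, heq]
    · calc minGauge hk F x' (a j) ≤ gauge F (x' ℓ₀ - a j) := Finset.inf'_le _ (Finset.mem_univ _)
        _ = gauge F (xb ℓ₀ - a j) := by rw [hx', Function.update_of_ne h]
  -- strict bound at i
  have hlt : minGauge hk F x' (a i) < minGauge hk F xb (a i) := by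
    have h1 : minGauge hk F x' (a i) ≤ 0 := by
      calc minGauge hk F x' (a i) ≤ gauge F (x' ℓ₂ - a i) := Finset.inf'_le _ (Finset.mem_univ _)
        _ = 0 := by rw [hx', Function.update_self, sub_self, gauge_zero]
    have h2 : 0 < minGauge hk F xb (a i) := by
      rw [minGauge]; apply (Finset.lt_inf'_iff _).2
      intro ℓ _
      apply hgpos
      intro hc
      apply hi
      rw [hT, Finset.mem_image]
      exact ⟨ℓ, Finset.mem_univ _, by rw [sub_eq_zero] at hc; exact hc⟩
    linarith
  have : weberObj hk F a x' < weberObj hk F a xb := by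
    apply Finset.sum_lt_sum (fun j _ => hle j) ⟨i, Finset.mem_univ _, hlt⟩
  exact absurd (hmin x') (not_le.2 this)
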